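/- For every μ > 0 there exists a constant C > 0 (depending only on μ) such that the following holds: for all radii R₂ > R₁ ≥ 2, if ψ ∈ C²(A) ∩ C(Ā), where A = B(0,R₂) ∖ closure(B(0,R₁)) ⊂ ℝ², satisfies −Δψ(y) = μ/(μ² + |y|²)^{3/2} in A and ψ = 0 on ∂A, then sup_{A} |ψ| ≤ (C/R₁) · log R₂ / (log R₂ − log R₁). -/

import Mathlib

open Real

/-- The Laplacian of a function on `ℝ²`, defined as the sum of the second partial
derivatives in the coordinate directions. -/
noncomputable def lap (u : EuclideanSpace ℝ (Fin 2) → ℝ) (x : EuclideanSpace ℝ (Fin 2)) : ℝ :=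
  ∑ i : Fin 2,
    fderiv ℝ (fun y => fderiv ℝ u y (EuclideanSpace.single i 1)) x (EuclideanSpace.single i 1)

section helpers

local notation "E2" => EuclideanSpace ℝ (Fin 2)

private lemma diffAt_fderiv_apply {v : E2 → ℝ} {x : E2}
    (hv : ContDiffAt ℝ 2 v x) (e : E2) :
    DifferentiableAt ℝ (fun y => fderiv ℝ v y e) x := by
  have h1 : ContDiffAt ℝ 1 (fderiv ℝ v) x := hv.fderiv_right (by norm_num)
  have h2 : DifferentiableAt ℝ (fderiv ℝ v) x := h1.differentiableAt one_ne_zero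
  exact ((ContinuousLinearMap.apply ℝ ℝ e).differentiableAt).comp x h2

private lemma eventually_diffAt {v : E2 → ℝ} {x : E2} (hv : ContDiffAt ℝ 2 v x) :
    ∀ᶠ y in nhds x, DifferentiableAt ℝ v y :=
  (hv.eventually (by norm_num)).mono fun y hy => hy.differentiableAt two_ne_zero

private lemma lap_sub {u w : E2 → ℝ} {x : E2} (hu : ContDiffAt ℝ 2 u x)
    (hw : ContDiffAt ℝ 2 w x) :
    lap (fun y => u y - w y) x = lap u x - lap w x := by
  unfold lap
  rw [← Finset.sum_sub_distrib]
  refine Finset.sum_congr rfl fun i _ => ?_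
  have h1 : (fun y => fderiv ℝ (fun z => u z - w z) y (EuclideanSpace.single i 1))
      =ᶠ[nhds x] fun y => fderiv ℝ u y (EuclideanSpace.single i 1)
        - fderiv ℝ w y (EuclideanSpace.single i 1) := by
    filter_upwards [eventually_diffAt hu, eventually_diffAt hw] with y h2 h3
    rw [fderiv_fun_sub h2 h3]
    rfl
  rw [h1.fderiv_eq, fderiv_fun_sub (diffAt_fderiv_apply hu _) (diffAt_fderiv_apply hw _)]
  rfl

private lemma lap_add {u w : E2 → ℝ} {x : E2} (hu : ContDiffAt ℝ 2 u x)
    (hw : ContDiffAt ℝ 2 w x) :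
    lap (fun y => u y + w y) x = lap u x + lap w x := by
  unfold lap
  rw [← Finset.sum_add_distrib]
  refine Finset.sum_congr rfl fun i _ => ?_
  have h1 : (fun y => fderiv ℝ (fun z => u z + w z) y (EuclideanSpace.single i 1))
      =ᶠ[nhds x] fun y => fderiv ℝ u y (EuclideanSpace.single i 1)
        + fderiv ℝ w y (EuclideanSpace.single i 1) := by
    filter_upwards [eventually_diffAt hu, eventually_diffAt hw] with y h2 h3
    rw [fderiv_fun_add h2 h3]
    rfl
  rw [h1.fderiv_eq, fderiv_fun_add (diffAt_fderiv_apply hu _) (diffAt_fderiv_apply hw _)]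
  rfl

private lemma second_deriv_test_nonneg {g g' : ℝ → ℝ} {c : ℝ}
    (hg : ∀ᶠ t in nhds (0:ℝ), HasDerivAt g (g' t) t)
    (hg' : HasDerivAt g' c 0) (hm : IsLocalMin g 0) : 0 ≤ c := by
  by_contra hc
  push_neg at hc
  have h0 : g' 0 = 0 := hm.hasDerivAt_eq_zero hg.self_of_nhds
  have hs : Filter.Tendsto (fun t => g' t / t) (nhdsWithin (0:ℝ) {(0:ℝ)}ᶜ) (nhds c) := by
    have h := hasDerivAt_iff_tendsto_slope.mp hg'
    have heq : slope g' 0 = fun t => g' t / t := by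
      funext t
      simp [slope_def_field, h0]
    rwa [heq] at h
  have hneg : ∀ᶠ t in nhdsWithin (0:ℝ) (Set.Ioi 0), g' t < 0 := by
    have h1 : ∀ᶠ t in nhdsWithin (0:ℝ) {(0:ℝ)}ᶜ, g' t / t < 0 := hs.eventually (gt_mem_nhds hc)
    have h2 : ∀ᶠ t in nhdsWithin (0:ℝ) (Set.Ioi 0), g' t / t < 0 :=
      h1.filter_mono (nhdsWithin_mono _ fun t ht => ne_of_gt ht)
    filter_upwards [h2, self_mem_nhdsWithin] with t h3 h4
    by_contra h5
    push_neg at h5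
    have h6 : (0:ℝ) ≤ g' t / t := div_nonneg h5 (le_of_lt h4)
    linarith
  rw [eventually_nhdsWithin_iff] at hneg
  have hall : ∀ᶠ t in nhds (0:ℝ),
      (t ∈ Set.Ioi (0:ℝ) → g' t < 0) ∧ HasDerivAt g (g' t) t ∧ g 0 ≤ g t :=
    hneg.and (hg.and hm)
  obtain ⟨ε, hεpos, hε⟩ := Metric.eventually_nhds_iff.mp hall
  set δ := ε / 2 with hδ
  have hδpos : 0 < δ := by positivity
  have hmem : ∀ t ∈ Set.Icc (0:ℝ) δ, dist t (0:ℝ) < ε := by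
    intro t ht
    rw [Real.dist_eq, sub_zero, abs_of_nonneg ht.1]
    have h7 := ht.2
    rw [hδ] at h7
    linarith
  have hanti : StrictAntiOn g (Set.Icc (0:ℝ) δ) := by
    apply strictAntiOn_of_deriv_neg (convex_Icc _ _)
    · intro t ht
      exact ((hε (hmem t ht)).2.1).differentiableAt.continuousAt.continuousWithinAt
    · intro t ht
      rw [interior_Icc] at ht
      have h6 := hε (hmem t ⟨le_of_lt ht.1, le_of_lt ht.2⟩)
      rw [h6.2.1.deriv]
      exact h6.1 ht.1
  have h7 : g δ < g 0 :=
    hanti (Set.left_mem_Icc.2 (le_of_lt hδpos)) (Set.right_mem_Icc.2 (le_of_lt hδpos)) hδpos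
  have h8 : g 0 ≤ g δ := by
    refine (hε ?_).2.2
    rw [Real.dist_eq, sub_zero, abs_of_pos hδpos, hδ]
    linarith
  linarith

private lemma lap_nonneg_of_isLocalMin {v : E2 → ℝ} {x : E2}
    (hv : ContDiffAt ℝ 2 v x) (hm : IsLocalMin v x) : 0 ≤ lap v x := by
  unfold lap
  apply Finset.sum_nonneg
  intro i _
  set e : E2 := EuclideanSpace.single i (1:ℝ) with he
  set ℓ : ℝ → E2 := fun t => x + t • e with hℓ
  have hℓc : Continuous ℓ := by fun_prop
  have hℓ0 : ℓ 0 = x := by simp [hℓ]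
  have hℓd : ∀ t : ℝ, HasDerivAt ℓ e t := by
    intro t
    have h0 := ((hasDerivAt_id t).smul_const e).const_add x
    simp only [one_smul] at h0
    exact h0
  have hten : Filter.Tendsto ℓ (nhds 0) (nhds x) := by
    have := hℓc.tendsto (0:ℝ)
    rwa [hℓ0] at this
  have hgd : ∀ᶠ t in nhds (0:ℝ), HasDerivAt (fun s => v (ℓ s)) (fderiv ℝ v (ℓ t) e) t := by
    filter_upwards [hten.eventually (eventually_diffAt hv)] with t ht
    have h2 := ht.hasFDerivAt.comp_hasDerivAt t (hℓd t)
    exact h2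
  have hg'd : HasDerivAt (fun t => fderiv ℝ v (ℓ t) e)
      (fderiv ℝ (fun y => fderiv ℝ v y e) x e) 0 := by
    have h1 := (diffAt_fderiv_apply hv e).hasFDerivAt
    rw [← hℓ0] at h1
    have h2 := h1.comp_hasDerivAt 0 (hℓd 0)
    rw [hℓ0] at h2
    exact h2
  have hgm : IsLocalMin (fun s => v (ℓ s)) 0 := by
    have h3 := hten.eventually hm
    simpa [IsLocalMin, IsMinFilter, hℓ0] using h3
  exact second_deriv_test_nonneg hgd hg'd hgm

private lemma weak_min_principle {A : Set (EuclideanSpace ℝ (Fin 2))} (hA : IsOpen A)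
    (hb : Bornology.IsBounded A) {v : E2 → ℝ} (hv : ∀ x ∈ A, ContDiffAt ℝ 2 v x)
    (hcont : ContinuousOn v (closure A)) (hlap : ∀ x ∈ A, lap v x < 0)
    (hfr : ∀ x ∈ frontier A, 0 ≤ v x) :
    ∀ x ∈ A, 0 ≤ v x := by
  intro x hx
  have hcp : IsCompact (closure A) :=
    Metric.isCompact_of_isClosed_isBounded isClosed_closure hb.closure
  obtain ⟨x₀, hx₀, hmin⟩ := hcp.exists_isMinOn ⟨x, subset_closure hx⟩ hcont
  have h0 : 0 ≤ v x₀ := by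
    by_cases hA0 : x₀ ∈ A
    · by_contra hneg
      push_neg at hneg
      have hloc : IsLocalMin v x₀ :=
        hmin.isLocalMin (Filter.mem_of_superset (hA.mem_nhds hA0) subset_closure)
      have h4 := lap_nonneg_of_isLocalMin (hv _ hA0) hloc
      linarith [hlap _ hA0]
    · exact hfr x₀ (by rw [hA.frontier_eq]; exact ⟨hx₀, hA0⟩)
  exact le_trans h0 (hmin (subset_closure hx))

private lemma hasF_rpow_normsq (p : ℝ) {y : E2} (hy : y ≠ 0) :
    HasFDerivAt (fun z : E2 => (‖z‖^2 : ℝ) ^ p)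
      ((p * (‖y‖^2:ℝ) ^ (p-1)) • (2 • ((innerSL ℝ) y))) y := by
  have hq : (‖y‖^2 : ℝ) ≠ 0 := pow_ne_zero _ (norm_ne_zero_iff.mpr hy)
  exact (Real.hasDerivAt_rpow_const (Or.inl hq)).comp_hasFDerivAt y
    (hasStrictFDerivAt_norm_sq y).hasFDerivAt

private lemma barrier_hasFDerivAt (b c : ℝ) {y : E2} (hy : y ≠ 0) :
    HasFDerivAt (fun z : E2 => c - b * ((‖z‖^2:ℝ) ^ (-(1/2):ℝ)))
      ((0 : E2 →L[ℝ] ℝ) - b • ((((-(1/2):ℝ)) * (‖y‖^2:ℝ) ^ ((-(1/2):ℝ)-1)) • (2 • ((innerSL ℝ) y)))) y :=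
  (hasFDerivAt_const c y).sub ((hasF_rpow_normsq (-(1/2)) hy).const_mul b)

private lemma barrier_fderiv_apply (b c : ℝ) {y : E2} (hy : y ≠ 0) (i : Fin 2) :
    fderiv ℝ (fun z : E2 => c - b * ((‖z‖^2:ℝ) ^ (-(1/2):ℝ))) y (EuclideanSpace.single i 1)
      = (b * ((‖y‖^2:ℝ) ^ (-(3/2):ℝ))) * y i := by
  rw [(barrier_hasFDerivAt b c hy).fderiv]
  have he : (‖y‖^2:ℝ) ^ (-(1/2) - 1 : ℝ) = (‖y‖^2:ℝ) ^ (-(3/2):ℝ) := by norm_num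
  simp [ContinuousLinearMap.smul_apply, two_smul, he, innerSL_apply_apply,
    EuclideanSpace.inner_single_right]
  ring

private lemma barrier_contDiffAt (b c : ℝ) {y : E2} (hy : y ≠ 0) :
    ContDiffAt ℝ 2 (fun z : E2 => c - b * ((‖z‖^2:ℝ) ^ (-(1/2):ℝ))) y := by
  have hq : (‖y‖^2 : ℝ) ≠ 0 := pow_ne_zero _ (norm_ne_zero_iff.mpr hy)
  exact contDiffAt_const.sub
    (contDiffAt_const.mul ((contDiff_norm_sq ℝ).contDiffAt.rpow_const_of_ne hq))

private lemma lap_barrier (b c : ℝ) {x : E2} (hx : x ≠ 0) :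
    lap (fun z : E2 => c - b * ((‖z‖^2:ℝ) ^ (-(1/2):ℝ))) x
      = -b * ((‖x‖^2:ℝ) ^ (-(3/2):ℝ)) := by
  have hq0 : (0:ℝ) < ‖x‖^2 := pow_pos (norm_pos_iff.mpr hx) 2
  have key : ∀ i : Fin 2,
      fderiv ℝ (fun y => fderiv ℝ (fun z : E2 => c - b * ((‖z‖^2:ℝ) ^ (-(1/2):ℝ))) y
        (EuclideanSpace.single i 1)) x (EuclideanSpace.single i 1)
      = b * ((‖x‖^2:ℝ) ^ (-(3/2):ℝ)) - 3*b*((‖x‖^2:ℝ) ^ (-(5/2):ℝ)) * (x i)^2 := by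
    intro i
    have hev : (fun y => fderiv ℝ (fun z : E2 => c - b * ((‖z‖^2:ℝ) ^ (-(1/2):ℝ))) y
        (EuclideanSpace.single i 1))
        =ᶠ[nhds x] (fun y => (b * ((‖y‖^2:ℝ) ^ (-(3/2):ℝ))) * y i) := by
      filter_upwards [IsOpen.mem_nhds isOpen_compl_singleton hx] with y hy
      exact barrier_fderiv_apply b c hy i
    rw [hev.fderiv_eq]
    have h1 : HasFDerivAt (fun y : E2 => b * ((‖y‖^2:ℝ) ^ (-(3/2):ℝ)))
        (b • ((((-(3/2):ℝ)) * (‖x‖^2:ℝ) ^ (((-(3/2):ℝ)) - 1)) • (2 • ((innerSL ℝ) x)))) x :=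
      (hasF_rpow_normsq (-(3/2)) hx).const_mul b
    have heq : (fun y : E2 => y i)
        = fun y : E2 => (inner ℝ (EuclideanSpace.single i (1:ℝ)) y : ℝ) := by
      funext y
      simp [EuclideanSpace.inner_single_left]
    have h2 : HasFDerivAt (fun y : E2 => y i)
        ((innerSL ℝ) (EuclideanSpace.single i (1:ℝ))) x := by
      rw [heq]
      exact ((innerSL ℝ) (EuclideanSpace.single i (1:ℝ))).hasFDerivAt
    have h3 := h1.fun_mul h2
    rw [h3.fderiv]
    have he5 : (‖x‖^2:ℝ) ^ ((-(3/2):ℝ) - 1 : ℝ) = (‖x‖^2:ℝ) ^ (-(5/2):ℝ) := by norm_num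
    simp [ContinuousLinearMap.add_apply, ContinuousLinearMap.smul_apply, two_smul,
      innerSL_apply_apply, EuclideanSpace.inner_single_left, EuclideanSpace.inner_single_right, he5]
    ring
  unfold lap
  rw [Fin.sum_univ_two, key 0, key 1]
  have hsum : (x 0)^2 + (x 1)^2 = ‖x‖^2 := by
    rw [EuclideanSpace.norm_eq, Real.sq_sqrt (Finset.sum_nonneg fun i _ => sq_nonneg _)]
    simp [Fin.sum_univ_two, Real.norm_eq_abs, sq_abs]
  have h52 : ((‖x‖^2:ℝ) ^ (-(5/2):ℝ)) * (‖x‖^2) = (‖x‖^2:ℝ) ^ (-(3/2):ℝ) := by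
    have h9 := Real.rpow_add hq0 (-(5/2)) 1
    rw [Real.rpow_one] at h9
    rw [← h9]
    norm_num
  linear_combination (-3*b) * h52 - 3*b*((‖x‖^2:ℝ) ^ (-(5/2):ℝ)) * hsum

end helpers

theorem annulus_barrier_estimate (μ : ℝ) (hμ : 0 < μ) :
    ∃ C : ℝ, 0 < C ∧ ∀ R₁ R₂ : ℝ, 2 ≤ R₁ → R₁ < R₂ →
      ∀ ψ : EuclideanSpace ℝ (Fin 2) → ℝ,
        ContDiffOn ℝ 2 ψ
          (Metric.ball (0 : EuclideanSpace ℝ (Fin 2)) R₂ \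
            closure (Metric.ball (0 : EuclideanSpace ℝ (Fin 2)) R₁)) →
        ContinuousOn ψ
          (closure (Metric.ball (0 : EuclideanSpace ℝ (Fin 2)) R₂ \
            closure (Metric.ball (0 : EuclideanSpace ℝ (Fin 2)) R₁))) →
        (∀ y ∈ Metric.ball (0 : EuclideanSpace ℝ (Fin 2)) R₂ \
            closure (Metric.ball (0 : EuclideanSpace ℝ (Fin 2)) R₁),
          -lap ψ y = μ / (μ ^ 2 + ‖y‖ ^ 2) ^ ((3 : ℝ) / 2)) →
        (∀ y ∈ frontier (Metric.ball (0 : EuclideanSpace ℝ (Fin 2)) R₂ \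
            closure (Metric.ball (0 : EuclideanSpace ℝ (Fin 2)) R₁)),
          ψ y = 0) →
        ∀ y ∈ Metric.ball (0 : EuclideanSpace ℝ (Fin 2)) R₂ \
            closure (Metric.ball (0 : EuclideanSpace ℝ (Fin 2)) R₁),
          |ψ y| ≤ (C / R₁) * Real.log R₂ / (Real.log R₂ - Real.log R₁) := by
  refine ⟨2*μ, by positivity, ?_⟩
  intro R₁ R₂ hR₁ hR12 ψ hψ hψc hpde hbdry y hy
  set A : Set (EuclideanSpace ℝ (Fin 2)) :=
    Metric.ball 0 R₂ \ closure (Metric.ball 0 R₁) with hAdef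
  have hR₁0 : (0:ℝ) < R₁ := by linarith
  have hAopen : IsOpen A := Metric.isOpen_ball.sdiff isClosed_closure
  have hAbd : Bornology.IsBounded A := Metric.isBounded_ball.subset Set.diff_subset
  have hclb : closure (Metric.ball (0 : EuclideanSpace ℝ (Fin 2)) R₁)
      = Metric.closedBall 0 R₁ := closure_ball 0 (ne_of_gt hR₁0)
  have hnormA : ∀ z ∈ A, R₁ < ‖z‖ := by
    intro z hz
    have h2 := hz.2
    rw [hclb, Metric.mem_closedBall, dist_zero_right] at h2
    exact lt_of_not_ge fun h => h2 h
  have hclA : ∀ z ∈ closure A, R₁ ≤ ‖z‖ := by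
    intro z hz
    have h3 : closure A ⊆ {w : EuclideanSpace ℝ (Fin 2) | R₁ ≤ ‖w‖} :=
      closure_minimal (fun w hw => le_of_lt (hnormA w hw))
        (isClosed_le continuous_const continuous_norm)
    exact h3 hz
  have hclne : ∀ z ∈ closure A, z ≠ 0 := by
    intro z hz h0
    have := hclA z hz
    rw [h0, norm_zero] at this
    linarith
  set b := 2*μ with hbdef
  set c := 2*μ/R₁ with hcdef
  set W : EuclideanSpace ℝ (Fin 2) → ℝ :=
    fun z => c - b * ((‖z‖^2:ℝ) ^ (-(1/2):ℝ)) with hWdef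
  have hWA : ∀ z ∈ A, ContDiffAt ℝ 2 W z := fun z hz =>
    barrier_contDiffAt b c (hclne z (subset_closure hz))
  have hWcl : ContinuousOn W (closure A) := fun z hz =>
    ((barrier_contDiffAt b c (hclne z hz)).continuousAt).continuousWithinAt
  have hψAt : ∀ z ∈ A, ContDiffAt ℝ 2 ψ z := fun z hz =>
    hψ.contDiffAt (hAopen.mem_nhds hz)
  -- value facts about W
  have hQinv : ∀ z : EuclideanSpace ℝ (Fin 2), z ≠ 0 →
      ((‖z‖^2:ℝ) ^ (-(1/2):ℝ)) = ‖z‖⁻¹ := by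
    intro z hz
    rw [← Real.rpow_natCast (‖z‖:ℝ) 2, ← Real.rpow_mul (norm_nonneg z),
      show ((2:ℕ):ℝ) * (-(1/2)) = -1 by norm_num, Real.rpow_neg_one]
  have hWfr : ∀ z ∈ frontier A, 0 ≤ W z := by
    intro z hz
    have hz' : z ∈ closure A := frontier_subset_closure hz
    have h1 : R₁ ≤ ‖z‖ := hclA z hz'
    have h2 : ‖z‖⁻¹ ≤ R₁⁻¹ := inv_anti₀ hR₁0 h1
    rw [hWdef]
    simp only []
    rw [hQinv z (hclne z hz')]
    have h3 : b * ‖z‖⁻¹ ≤ b * R₁⁻¹ := by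
      apply mul_le_mul_of_nonneg_left h2
      rw [hbdef]; positivity
    have h4 : c = b * R₁⁻¹ := by rw [hcdef, hbdef]; field_simp
    linarith
  have hWle : ∀ z : EuclideanSpace ℝ (Fin 2), W z ≤ c := by
    intro z
    have h1 : (0:ℝ) ≤ (‖z‖^2:ℝ) ^ (-(1/2):ℝ) := Real.rpow_nonneg (by positivity) _
    have h2 : (0:ℝ) ≤ b := by rw [hbdef]; positivity
    rw [hWdef]
    simp only []
    nlinarith
  -- Laplacian comparison
  have hlapW : ∀ z ∈ A, lap W z = -b * ((‖z‖^2:ℝ) ^ (-(3/2):ℝ)) := fun z hz =>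
    lap_barrier b c (hclne z (subset_closure hz))
  have hlapψ : ∀ z ∈ A, lap ψ z = -(μ / (μ ^ 2 + ‖z‖ ^ 2) ^ ((3 : ℝ) / 2)) := by
    intro z hz
    have := hpde z hz
    linarith
  have hcomp : ∀ z ∈ A,
      μ / (μ ^ 2 + ‖z‖ ^ 2) ^ ((3 : ℝ) / 2) < b * ((‖z‖^2:ℝ) ^ (-(3/2):ℝ)) := by
    intro z hz
    have hz0 : (0:ℝ) < ‖z‖ := lt_of_le_of_lt (by linarith) (hnormA z hz)
    have hq0 : (0:ℝ) < ‖z‖^2 := pow_pos hz0 2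
    have hP : (0:ℝ) < (‖z‖^2:ℝ) ^ ((3:ℝ)/2) := Real.rpow_pos_of_pos hq0 _
    have hPμ : (‖z‖^2:ℝ) ^ ((3:ℝ)/2) ≤ (μ^2 + ‖z‖^2:ℝ) ^ ((3:ℝ)/2) :=
      Real.rpow_le_rpow (le_of_lt hq0) (by nlinarith) (by norm_num)
    have hPμ0 : (0:ℝ) < (μ^2 + ‖z‖^2:ℝ) ^ ((3:ℝ)/2) := lt_of_lt_of_le hP hPμ
    have hneg : ((‖z‖^2:ℝ) ^ (-(3/2):ℝ)) = ((‖z‖^2:ℝ) ^ ((3:ℝ)/2))⁻¹ := by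
      rw [show (-(3/2):ℝ) = -((3:ℝ)/2) by norm_num, Real.rpow_neg (le_of_lt hq0)]
    rw [hneg, hbdef]
    have h1 : μ / (μ^2 + ‖z‖^2:ℝ) ^ ((3:ℝ)/2) ≤ μ / (‖z‖^2:ℝ) ^ ((3:ℝ)/2) :=
      div_le_div_of_nonneg_left (le_of_lt hμ) hP hPμ
    have h2 : μ / (‖z‖^2:ℝ) ^ ((3:ℝ)/2) = μ * ((‖z‖^2:ℝ) ^ ((3:ℝ)/2))⁻¹ := div_eq_mul_inv _ _
    have h3 : (0:ℝ) < ((‖z‖^2:ℝ) ^ ((3:ℝ)/2))⁻¹ := inv_pos.mpr hP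
    nlinarith
  -- apply the minimum principle to W - ψ and W + ψ
  have h₁ : ∀ z ∈ A, 0 ≤ W z - ψ z := by
    refine weak_min_principle hAopen hAbd
      (fun z hz => (hWA z hz).sub (hψAt z hz)) (hWcl.sub hψc) ?_ ?_
    · intro z hz
      rw [lap_sub (hWA z hz) (hψAt z hz), hlapW z hz, hlapψ z hz]
      have := hcomp z hz
      linarith
    · intro z hz
      rw [hbdry z hz]
      simpa using hWfr z hz
  have h₂ : ∀ z ∈ A, 0 ≤ W z + ψ z := by
    refine weak_min_principle hAopen hAbd
      (fun z hz => (hWA z hz).add (hψAt z hz)) (hWcl.add hψc) ?_ ?_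
    · intro z hz
      rw [lap_add (hWA z hz) (hψAt z hz), hlapW z hz, hlapψ z hz]
      have h4 := hcomp z hz
      have hz0 : (0:ℝ) < ‖z‖ := lt_of_le_of_lt (by linarith) (hnormA z hz)
      have hq0 : (0:ℝ) < ‖z‖^2 := pow_pos hz0 2
      have h5 : (0:ℝ) < (‖z‖^2:ℝ) ^ (-(3/2):ℝ) := Real.rpow_pos_of_pos hq0 _
      have h6 : (0:ℝ) < μ / (μ ^ 2 + ‖z‖ ^ 2) ^ ((3 : ℝ) / 2) := by
        apply div_pos hμ
        apply Real.rpow_pos_of_pos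
        nlinarith
      nlinarith
    · intro z hz
      rw [hbdry z hz]
      simpa using hWfr z hz
  -- conclude
  have habs : |ψ y| ≤ c := by
    have ha := h₁ y hy
    have hb' := h₂ y hy
    have hc' := hWle y
    rw [abs_le]
    constructor <;> linarith
  have hL1 : 0 < Real.log R₁ := Real.log_pos (by linarith)
  have hL12 : Real.log R₁ < Real.log R₂ := Real.log_lt_log hR₁0 hR12
  have hfin : c ≤ (2*μ / R₁) * Real.log R₂ / (Real.log R₂ - Real.log R₁) := by
    rw [hcdef, le_div_iff₀ (by linarith)]
    have hc0 : 0 < 2*μ/R₁ := by positivity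
    nlinarith [mul_pos hc0 hL1]
  linarith
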